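/- arXiv:2001.10087 — 4 statements merged into one kernel-verified Lean document; each statement's English description precedes it below -/
import Mathlib

section
/- Let I be an SMTI-Diverse instance, for each z ∈ T let U_z = {u ∈ U : τ_u[z] = 1}, let F = {U_z : z ∈ T}, and let f : {1,…,|F|} → F be a bijection. Let I* be the instance with type set T* = {1,…,|F|}, type vectors τ*_u given by τ*_u[z*] = 1 iff u ∈ f(z*), quota vectors ℓ*_w[z*] = max{ℓ_w[z] : z ∈ T, U_z = f(z*)} and u*_w[z*] = min{u_w[z] : z ∈ T, U_z = f(z*)}, and with the same students, colleges, preference lists, acceptable sets and capacities as I. Then every matching M is feasible and stable for I if and only if M is feasible and stable for I*. -/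
open scoped Classical

noncomputable section

/-- An SMTI-Diverse instance: students `S`, colleges `C`, types `T`.
Preferences are encoded by rank functions (smaller rank = more preferred);
ties are allowed.  `acc` is the (symmetric) acceptability relation, `tau`
the 0/1 type vectors (encoded as `Bool`), `lq`/`uq` the lower/upper quota
vectors and `cap` the capacities. -/
structure SMTI (S C T : Type) [Fintype S] [Fintype C] [Fintype T] where
  acc : S → C → Prop
  tau : S → T → Bool
  rankS : S → C → ℕ
  rankC : C → S → ℕ
  lq : C → T → ℕ
  uq : C → T → ℕ
  cap : C → ℕ

namespace SMTI

variable {S C T : Type} [Fintype S] [Fintype C] [Fintype T]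

/-- `f : S → Option C` encodes a matching: every assigned college is acceptable. -/
def IsMatching (I : SMTI S C T) (f : S → Option C) : Prop :=
  ∀ u w, f u = some w → I.acc u w

/-- The set `M(w)` of students assigned to college `w`. -/
def assigned (I : SMTI S C T) (f : S → Option C) (w : C) : Finset S :=
  Finset.univ.filter fun u => f u = some w

/-- The number of students of type `z` assigned to `w`. -/
def typeLoad (I : SMTI S C T) (f : S → Option C) (w : C) (z : T) : ℕ :=
  ∑ u ∈ I.assigned f w, (I.tau u z).toNat

/-- Feasibility: capacities respected and quotas met at all colleges. -/
def Feasible (I : SMTI S C T) (f : S → Option C) : Prop :=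
  ∀ w, (I.assigned f w).card ≤ I.cap w ∧
    ∀ z, I.lq w z ≤ I.typeLoad f w z ∧ I.typeLoad f w z ≤ I.uq w z

/-- `u` strictly prefers `w` to its assigned college (in particular if unmatched). -/
def PrefersTo (I : SMTI S C T) (f : S → Option C) (u : S) (w : C) : Prop :=
  ∀ w', f u = some w' → I.rankS u w < I.rankS u w'

/-- `{u,w}` is a blocking pair of `f` witnessed by `U' ⊆ M(w)`. -/
def BlocksWith (I : SMTI S C T) (f : S → Option C) (u : S) (w : C) (U' : Finset S) : Prop :=
  f u ≠ some w ∧ I.acc u w ∧ I.PrefersTo f u w ∧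
  U' ⊆ I.assigned f w ∧
  (∀ u' ∈ U', I.rankC w u < I.rankC w u') ∧
  (I.assigned f w \ U').card + 1 ≤ I.cap w ∧
  ∀ z, I.lq w z ≤ (I.tau u z).toNat + ∑ u' ∈ I.assigned f w \ U', (I.tau u' z).toNat ∧
    (I.tau u z).toNat + ∑ u' ∈ I.assigned f w \ U', (I.tau u' z).toNat ≤ I.uq w z

/-- `{u,w}` is a blocking pair of `f` (with some witness). -/
def BlockingPair (I : SMTI S C T) (f : S → Option C) (u : S) (w : C) : Prop :=
  ∃ U', I.BlocksWith f u w U'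

/-- Stability: no blocking pair at all. -/
def Stable (I : SMTI S C T) (f : S → Option C) : Prop :=
  ∀ u w, ¬ I.BlockingPair f u w

end SMTI

namespace SMTI

variable {S C T : Type} [Fintype S] [Fintype C] [Fintype T]

/-- `U_z`: the set of students having type `z`. -/
def Uz (I : SMTI S C T) (z : T) : Finset S :=
  Finset.univ.filter fun u => I.tau u z = true

end SMTI

/-- Merging duplicate types: let `F = {U_z : z ∈ T}` and let
`fb : Fin k → Finset S` enumerate `F` bijectively.  Let `I'` be the instance on the
type set `Fin k` with `τ'_u[z'] = 1` iff `u ∈ fb z'`, lower quotas the maxima and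
upper quotas the minima of the merged quotas, and everything else unchanged.
Then a matching is feasible and stable for `I` iff it is feasible and stable for `I'`. -/
theorem stmt15 {S C T : Type} [Fintype S] [Fintype C] [Fintype T]
    (I : SMTI S C T) (k : ℕ) (fb : Fin k → Finset S)
    (hmem : ∀ z' : Fin k, ∃ z : T, fb z' = I.Uz z)
    (hinj : Function.Injective fb)
    (hsurj : ∀ z : T, ∃ z' : Fin k, fb z' = I.Uz z)
    (I' : SMTI S C (Fin k))
    (hacc : I'.acc = I.acc) (hrS : I'.rankS = I.rankS) (hrC : I'.rankC = I.rankC)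
    (hcap : I'.cap = I.cap)
    (htau : ∀ (u : S) (z' : Fin k), I'.tau u z' = decide (u ∈ fb z'))
    (hlq : ∀ (w : C) (z' : Fin k),
      (∃ z : T, I.Uz z = fb z' ∧ I'.lq w z' = I.lq w z) ∧
      (∀ z : T, I.Uz z = fb z' → I.lq w z ≤ I'.lq w z'))
    (huq : ∀ (w : C) (z' : Fin k),
      (∃ z : T, I.Uz z = fb z' ∧ I'.uq w z' = I.uq w z) ∧
      (∀ z : T, I.Uz z = fb z' → I'.uq w z' ≤ I.uq w z))
    (f : S → Option C) :
    (I.IsMatching f ∧ I.Feasible f ∧ I.Stable f) ↔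
      (I'.IsMatching f ∧ I'.Feasible f ∧ I'.Stable f) := by
  have key : ∀ (z : T) (z' : Fin k), I.Uz z = fb z' →
      ∀ u : S, (I'.tau u z').toNat = (I.tau u z).toNat := by
    intro z z' h u
    rw [htau]
    have hiff : (u ∈ fb z') ↔ I.tau u z = true := by
      rw [← h]; simp [SMTI.Uz]
    by_cases hb : I.tau u z = true
    · simp [hb, hiff.mpr hb]
    · simp only [Bool.not_eq_true] at hb
      have : u ∉ fb z' := fun hmem' => by simp [hiff.mp hmem'] at hb
      simp [hb, this]
  have keySum : ∀ (z : T) (z' : Fin k), I.Uz z = fb z' → ∀ s : Finset S,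
      ∑ u ∈ s, (I'.tau u z').toNat = ∑ u ∈ s, (I.tau u z).toNat :=
    fun z z' h s => Finset.sum_congr rfl fun u _ => key z z' h u
  have hassigned : ∀ w, I'.assigned f w = I.assigned f w := fun w => rfl
  have hload : ∀ (z : T) (z' : Fin k), I.Uz z = fb z' → ∀ w,
      I'.typeLoad f w z' = I.typeLoad f w z := by
    intro z z' h w
    unfold SMTI.typeLoad
    rw [hassigned]
    exact keySum z z' h _
  have matchIff : I.IsMatching f ↔ I'.IsMatching f := by
    unfold SMTI.IsMatching; rw [hacc]
  have feasIff : I.Feasible f ↔ I'.Feasible f := by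
    constructor
    · intro hf w
      obtain ⟨hc, hq⟩ := hf w
      refine ⟨by rw [hassigned, hcap]; exact hc, ?_⟩
      intro z'
      obtain ⟨⟨zl, hzl, hzl'⟩, _⟩ := hlq w z'
      obtain ⟨⟨zu, hzu, hzu'⟩, _⟩ := huq w z'
      constructor
      · rw [hzl', hload zl z' hzl]; exact (hq zl).1
      · rw [hzu', hload zu z' hzu]; exact (hq zu).2
    · intro hf w
      obtain ⟨hc, hq⟩ := hf w
      refine ⟨by rw [← hcap, ← hassigned]; exact hc, ?_⟩
      intro z
      obtain ⟨z', hz'⟩ := hsurj z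
      obtain ⟨_, hl2⟩ := hlq w z'
      obtain ⟨_, hu2⟩ := huq w z'
      constructor
      · calc I.lq w z ≤ I'.lq w z' := hl2 z hz'.symm
          _ ≤ I'.typeLoad f w z' := (hq z').1
          _ = I.typeLoad f w z := hload z z' hz'.symm w
      · calc I.typeLoad f w z = I'.typeLoad f w z' := (hload z z' hz'.symm w).symm
          _ ≤ I'.uq w z' := (hq z').2
          _ ≤ I.uq w z := hu2 z hz'.symm
  have blockIff : ∀ u w U', I.BlocksWith f u w U' ↔ I'.BlocksWith f u w U' := by
    intro u w U'
    unfold SMTI.BlocksWith SMTI.PrefersTo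
    rw [hacc, hrS, hrC, hcap, hassigned]
    refine and_congr Iff.rfl (and_congr Iff.rfl (and_congr Iff.rfl
      (and_congr Iff.rfl (and_congr Iff.rfl (and_congr Iff.rfl ?_)))))
    constructor
    · intro h7 z'
      obtain ⟨⟨zl, hzl, hzl'⟩, _⟩ := hlq w z'
      obtain ⟨⟨zu, hzu, hzu'⟩, _⟩ := huq w z'
      constructor
      · rw [hzl', key zl z' hzl u, keySum zl z' hzl]; exact (h7 zl).1
      · rw [hzu', key zu z' hzu u, keySum zu z' hzu]; exact (h7 zu).2
    · intro h7 z
      obtain ⟨z', hz'⟩ := hsurj z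
      obtain ⟨_, hl2⟩ := hlq w z'
      obtain ⟨_, hu2⟩ := huq w z'
      have he : (I'.tau u z').toNat + ∑ u' ∈ I.assigned f w \ U', (I'.tau u' z').toNat
          = (I.tau u z).toNat + ∑ u' ∈ I.assigned f w \ U', (I.tau u' z).toNat := by
        rw [key z z' hz'.symm u, keySum z z' hz'.symm]
      constructor
      · calc I.lq w z ≤ I'.lq w z' := hl2 z hz'.symm
          _ ≤ _ := (h7 z').1
          _ = _ := he
      · calc (I.tau u z).toNat + ∑ u' ∈ I.assigned f w \ U', (I.tau u' z).toNat
            = _ := he.symm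
          _ ≤ I'.uq w z' := (h7 z').2
          _ ≤ I.uq w z := hu2 z hz'.symm
  have stabIff : I.Stable f ↔ I'.Stable f := by
    unfold SMTI.Stable SMTI.BlockingPair
    constructor
    · intro hs u w ⟨U', hb⟩; exact hs u w ⟨U', (blockIff u w U').mpr hb⟩
    · intro hs u w ⟨U', hb⟩; exact hs u w ⟨U', (blockIff u w U').mp hb⟩
  rw [matchIff, feasIff, stabIff]
end
end

section
/- Let I be an SMTI-Diverse instance in which no preference list has ties and every lower quota is zero. Let w ∈ W be a college with q_w ≥ 1 and let u ∈ A(w) be such that τ_u ≤ u_w componentwise and w strictly prefers u to every other student u' ∈ A(w) with τ_{u'} ≤ u_w componentwise. Then every feasible and stable matching M satisfies M(u) ⪰_u w; in particular, u is matched by M. -/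
open scoped Classical

noncomputable section

/-- Suppose there are no ties and all lower quotas are zero.
If `w` has positive capacity and `u` is the student `w` strictly prefers to every
other acceptable student whose type vector fits below `w`'s upper quotas (and `u`
itself fits), then every feasible and stable matching assigns to `u` a college it
weakly prefers to `w`; in particular `u` is matched. -/
theorem stmt17 {S C T : Type} [Fintype S] [Fintype C] [Fintype T]
    (I : SMTI S C T)
    (hstrictS : ∀ (s : S) (c c' : C), I.acc s c → I.acc s c' →
      I.rankS s c = I.rankS s c' → c = c')
    (hstrictC : ∀ (c : C) (s s' : S), I.acc s c → I.acc s' c →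
      I.rankC c s = I.rankC c s' → s = s')
    (hlq : ∀ w z, I.lq w z = 0)
    (w : C) (hq : 1 ≤ I.cap w)
    (u : S) (hacc : I.acc u w)
    (hfit : ∀ z, (I.tau u z).toNat ≤ I.uq w z)
    (hbest : ∀ u' : S, u' ≠ u → I.acc u' w → (∀ z, (I.tau u' z).toNat ≤ I.uq w z) →
      I.rankC w u < I.rankC w u')
    (f : S → Option C) (hM : I.IsMatching f) (hfeas : I.Feasible f) (hstab : I.Stable f) :
    ∃ w' : C, f u = some w' ∧ I.rankS u w' ≤ I.rankS u w := by
  by_contra h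
  push_neg at h
  have hpref : I.PrefersTo f u w := by
    intro w' hw'
    exact h w' hw'
  have hne : f u ≠ some w := by
    intro hfu
    exact lt_irrefl _ (h w hfu)
  apply hstab u w
  refine ⟨I.assigned f w, hne, hacc, hpref, Finset.Subset.refl _, ?_, ?_, ?_⟩
  · intro u' hu'
    simp only [SMTI.assigned, Finset.mem_filter] at hu'
    have hacc' : I.acc u' w := hM u' w hu'.2
    have hne' : u' ≠ u := by
      intro hEq; exact hne (hEq ▸ hu'.2)
    have hfit' : ∀ z, (I.tau u' z).toNat ≤ I.uq w z := by
      intro z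
      have h1 : (I.tau u' z).toNat ≤ I.typeLoad f w z := by
        apply Finset.single_le_sum (f := fun s => (I.tau s z).toNat)
          (fun _ _ => Nat.zero_le _)
        simp [SMTI.assigned, hu'.2]
      exact h1.trans ((hfeas w).2 z).2
    exact hbest u' hne' hacc' hfit'
  · simpa using hq
  · intro z
    simp [hlq, hfit z]
end
end

section
/- Let I be an SMTI-Diverse instance with t ≥ 1 types, let M be a feasible matching, and suppose {u,w} is a blocking pair of M (with some witness). Then there is a witness U'' ⊆ M(w) for the blocking pair {u,w} with |U''| ≤ min{t, q_w}. -/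
open scoped Classical

noncomputable section

/-- Every blocking pair of a feasible matching has a witness of
size at most `min t q_w`. -/
theorem stmt18 {S C T : Type} [Fintype S] [Fintype C] [Fintype T]
    (ht : 1 ≤ Fintype.card T)
    (I : SMTI S C T) (f : S → Option C) (hM : I.IsMatching f) (hfeas : I.Feasible f)
    (u : S) (w : C) (hbp : I.BlockingPair f u w) :
    ∃ U'' : Finset S, I.BlocksWith f u w U'' ∧
      U''.card ≤ min (Fintype.card T) (I.cap w) := by
  classical
  obtain ⟨U', hne, hacc, hpref, hsub, hrank, hcap, hquota⟩ := hbp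
  set A := I.assigned f w with hA
  have hAcap : A.card ≤ I.cap w := (hfeas w).1
  have hload : ∀ z, I.typeLoad f w z = ∑ u' ∈ A, (I.tau u' z).toNat := fun z => rfl
  set Bad : Finset T :=
    Finset.univ.filter (fun z => I.uq w z < (I.tau u z).toNat + I.typeLoad f w z) with hBadDef
  -- for each bad type there is a member of U' with that type
  have hex : ∀ z : T, ∃ u' : S, z ∈ Bad → u' ∈ U' ∧ I.tau u' z = true := by
    intro z
    by_cases hz : z ∈ Bad
    · simp only [hBadDef, Finset.mem_filter] at hz
      by_contra hcon
      push_neg at hcon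
      have hzero : ∑ u' ∈ U', (I.tau u' z).toNat = 0 := by
        apply Finset.sum_eq_zero
        intro u' hu'
        have h := (hcon u').2 hu'
        simp [Bool.toNat_eq_zero.mpr (by simpa using h)]
      have hsplit : ∑ u' ∈ A \ U', (I.tau u' z).toNat + ∑ u' ∈ U', (I.tau u' z).toNat
          = ∑ u' ∈ A, (I.tau u' z).toNat := Finset.sum_sdiff hsub
      have hle := (hquota z).2
      rw [hload z] at hz
      omega
    · exact ⟨u, fun h => absurd h hz⟩
  choose g hg using hex
  -- core lemma: any subset of U' covering the bad types, and handling capacity, blocks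
  have core : ∀ U'' : Finset S, U'' ⊆ U' →
      (∀ z ∈ Bad, ∃ u' ∈ U'', I.tau u' z = true) →
      (A.card + 1 ≤ I.cap w ∨ U''.Nonempty) →
      I.BlocksWith f u w U'' := by
    intro U'' hU'' hcov hcc
    have hU''A : U'' ⊆ A := hU''.trans hsub
    refine ⟨hne, hacc, hpref, hU''A, fun u' hu' => hrank u' (hU'' hu'), ?_, ?_⟩
    · -- capacity
      rw [← hA]
      rcases hcc with h | h
      · calc (A \ U'').card + 1 ≤ A.card + 1 := by
              gcongr; exact Finset.sdiff_subset
          _ ≤ I.cap w := h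
      · have h1 : (A \ U'').card = A.card - U''.card := Finset.card_sdiff_of_subset hU''A
        have h2 : 1 ≤ U''.card := Finset.card_pos.mpr h
        have h3 : U''.card ≤ A.card := Finset.card_le_card hU''A
        omega
    · intro z
      rw [← hA]
      have hsplit' : ∀ V : Finset S, V ⊆ A →
          ∑ u' ∈ A \ V, (I.tau u' z).toNat + ∑ u' ∈ V, (I.tau u' z).toNat
          = ∑ u' ∈ A, (I.tau u' z).toNat := fun V hV => Finset.sum_sdiff hV
      have hs1 := hsplit' U' hsub
      have hs2 := hsplit' U'' hU''A
      have hmono : ∑ u' ∈ U'', (I.tau u' z).toNat ≤ ∑ u' ∈ U', (I.tau u' z).toNat :=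
        Finset.sum_le_sum_of_subset hU''
      constructor
      · -- lower quota
        have := (hquota z).1
        omega
      · -- upper quota
        by_cases hz : z ∈ Bad
        · obtain ⟨u', hu'U, hu't⟩ := hcov z hz
          have h1 : 1 ≤ ∑ u'' ∈ U'', (I.tau u'' z).toNat := by
            refine le_trans ?_ (Finset.single_le_sum (f := fun u'' => (I.tau u'' z).toNat)
              (fun _ _ => Nat.zero_le _) hu'U)
            simp [hu't]
          have hub : I.typeLoad f w z ≤ I.uq w z := (hfeas w).2 z |>.2
          have htu : (I.tau u z).toNat ≤ 1 := Bool.toNat_le _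
          rw [hload z] at hub
          omega
        · simp only [hBadDef, Finset.mem_filter, Finset.mem_univ, true_and, not_lt] at hz
          rw [hload z] at hz
          omega
  -- now construct the witness
  by_cases hB : Bad.Nonempty
  · refine ⟨Bad.image g, core _ ?_ ?_ (Or.inr (hB.image g)), ?_⟩
    · intro x hx
      obtain ⟨z, hz, rfl⟩ := Finset.mem_image.mp hx
      exact (hg z hz).1
    · intro z hz
      exact ⟨g z, Finset.mem_image_of_mem g hz, (hg z hz).2⟩
    · have h1 : (Bad.image g).card ≤ Fintype.card T :=
        le_trans (Finset.card_image_le) (le_trans (Finset.card_le_card (Finset.subset_univ _))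
          Finset.card_univ.le)
      have h2 : Bad.image g ⊆ A := by
        intro x hx
        obtain ⟨z, hz, rfl⟩ := Finset.mem_image.mp hx
        exact hsub (hg z hz).1
      exact le_min h1 (le_trans (Finset.card_le_card h2) hAcap)
  · by_cases hc : A.card + 1 ≤ I.cap w
    · refine ⟨∅, core _ (Finset.empty_subset _) ?_ (Or.inl hc), by simp⟩
      intro z hz
      exact absurd ⟨z, hz⟩ hB
    · -- capacity tight: U' must be nonempty
      have hU'ne : U'.Nonempty := by
        rw [Finset.nonempty_iff_ne_empty]
        intro h
        rw [h, Finset.sdiff_empty] at hcap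
        omega
      obtain ⟨u₀, hu₀⟩ := hU'ne
      refine ⟨{u₀}, core _ (by simpa using hu₀) ?_ (Or.inr ⟨u₀, by simp⟩), ?_⟩
      · intro z hz
        exact absurd ⟨z, hz⟩ hB
      · have hcap1 : 1 ≤ I.cap w := by omega
        simp [ht, hcap1]
end
end

section
/- In the Set Cover construction the following are equivalent: (i) there exists a set cover C ⊆ {S_1,…,S_{m*}} with |C| ≤ k; (ii) the constructed instance admits a feasible matching; (iii) the constructed instance admits a feasible and stable matching. -/
open scoped Classical

noncomputable section

section SetCover

/-- Students of the Set Cover construction: set-students `Sum.inl i` and dummy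
students `Sum.inr i` for `i ∈ Fin mm`. -/
abbrev SCSt (mm : ℕ) := Fin mm ⊕ Fin mm

/-- Types of the Set Cover construction: one type per universe element, one type
per set, and one extra type for the dummy students. -/
abbrev SCTy (nn mm : ℕ) := Fin nn ⊕ (Fin mm ⊕ Unit)

/-- The Set Cover instance: a single college `w` accepting everybody;
`τ_{s_i}[z] = 1` iff (`z ∈ [n*]` and `x_z ∈ S_i`) or `z = n* + i`;
`τ_{d_i}[z] = 1` iff (`n* < z ≤ n* + m*` and `z ≠ n* + i`) or `z = n* + m* + 1`;
`w`'s strict preference list is `s_1 ≻ d_1 ≻ s_2 ≻ d_2 ≻ ⋯`;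
`ℓ_w[z] = 1` for element types and `k` for the remaining ones; `u_w ≡ k`;
`q_w = 2k`. -/
def SCInst (nn mm k : ℕ) (SS : Fin mm → Finset (Fin nn)) :
    SMTI (SCSt mm) Unit (SCTy nn mm) where
  acc := fun _ _ => True
  tau := fun st t =>
    match st, t with
    | Sum.inl i, Sum.inl z => decide (z ∈ SS i)
    | Sum.inl i, Sum.inr (Sum.inl i') => decide (i' = i)
    | Sum.inl _, Sum.inr (Sum.inr _) => false
    | Sum.inr _, Sum.inl _ => false
    | Sum.inr i, Sum.inr (Sum.inl i') => decide (i' ≠ i)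
    | Sum.inr _, Sum.inr (Sum.inr _) => true
  rankS := fun _ _ => 0
  rankC := fun _ st =>
    match st with
    | Sum.inl i => 2 * (i : ℕ)
    | Sum.inr i => 2 * (i : ℕ) + 1
  lq := fun _ t =>
    match t with
    | Sum.inl _ => 1
    | Sum.inr _ => k
  uq := fun _ _ => k
  cap := fun _ => 2 * k

end SetCover

section Stmt19Aux

variable {nn mm k : ℕ} {SS : Fin mm → Finset (Fin nn)}

/-- Set-student part of a set of students. -/
def pA (M : Finset (SCSt mm)) : Finset (Fin mm) :=
  Finset.univ.filter (fun i => Sum.inl i ∈ M)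

/-- Dummy-student part of a set of students. -/
def pB (M : Finset (SCSt mm)) : Finset (Fin mm) :=
  Finset.univ.filter (fun i => Sum.inr i ∈ M)

lemma mem_pA {M : Finset (SCSt mm)} {i : Fin mm} : i ∈ pA M ↔ Sum.inl i ∈ M := by
  simp [pA]

lemma mem_pB {M : Finset (SCSt mm)} {i : Fin mm} : i ∈ pB M ↔ Sum.inr i ∈ M := by
  simp [pB]

lemma sum_parts (M : Finset (SCSt mm)) (g : SCSt mm → ℕ) :
    ∑ u ∈ M, g u = (∑ i ∈ pA M, g (Sum.inl i)) + ∑ i ∈ pB M, g (Sum.inr i) := by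
  classical
  have h1 : ∑ u ∈ M, g u = ∑ u : SCSt mm, if u ∈ M then g u else 0 := by
    rw [Finset.sum_ite_mem, Finset.univ_inter]
  rw [h1, Fintype.sum_sum_type]
  congr 1 <;> simp [pA, pB, Finset.sum_filter]

lemma load_elem (M : Finset (SCSt mm)) (z : Fin nn) :
    ∑ u ∈ M, ((SCInst nn mm k SS).tau u (Sum.inl z)).toNat
      = ((pA M).filter (fun i => z ∈ SS i)).card := by
  rw [sum_parts, Finset.card_filter]
  have h2 : ∑ i ∈ pB M, ((SCInst nn mm k SS).tau (Sum.inr i) (Sum.inl z)).toNat = 0 :=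
    Finset.sum_eq_zero fun i _ => rfl
  rw [h2, Nat.add_zero]
  apply Finset.sum_congr rfl
  intro i _
  by_cases h : z ∈ SS i <;> simp [SCInst, h]

lemma load_set (M : Finset (SCSt mm)) (i' : Fin mm) :
    ∑ u ∈ M, ((SCInst nn mm k SS).tau u (Sum.inr (Sum.inl i'))).toNat
      = (if i' ∈ pA M then 1 else 0) + ((pB M).erase i').card := by
  classical
  rw [sum_parts]
  congr 1
  · have : ∀ i ∈ pA M, ((SCInst nn mm k SS).tau (Sum.inl i) (Sum.inr (Sum.inl i'))).toNat
        = if i' = i then 1 else 0 := by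
      intro i _
      by_cases h : i' = i <;> simp [SCInst, h]
    rw [Finset.sum_congr rfl this, Finset.sum_ite_eq]
  · rw [← Finset.filter_ne (pB M) i', Finset.card_filter]
    apply Finset.sum_congr rfl
    intro i _
    by_cases h : i' = i <;> simp [SCInst, h]

lemma load_dummy (M : Finset (SCSt mm)) (uu : Unit) :
    ∑ u ∈ M, ((SCInst nn mm k SS).tau u (Sum.inr (Sum.inr uu))).toNat = (pB M).card := by
  rw [sum_parts]
  have h1 : ∑ i ∈ pA M, ((SCInst nn mm k SS).tau (Sum.inl i) (Sum.inr (Sum.inr uu))).toNat = 0 :=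
    Finset.sum_eq_zero fun i _ => rfl
  have h2 : ∀ i ∈ pB M, ((SCInst nn mm k SS).tau (Sum.inr i) (Sum.inr (Sum.inr uu))).toNat = 1 :=
    fun i _ => rfl
  rw [h1, Finset.sum_congr rfl h2, Nat.zero_add, Finset.sum_const, smul_eq_mul, Nat.mul_one]

lemma sdiff_inst_congr (M U' : Finset (SCSt mm)) :
    @SDiff.sdiff _ (@Finset.instSDiff _ (fun a b => Classical.propDecidable (a = b))) M U'
      = M \ U' := by
  exact congrArg (fun i => @SDiff.sdiff _ (@Finset.instSDiff (SCSt mm) i) M U')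
    (Subsingleton.elim _ _)

lemma card_parts (M : Finset (SCSt mm)) : M.card = (pA M).card + (pB M).card := by
  rw [Finset.card_eq_sum_ones M, sum_parts M (fun _ => 1), ← Finset.card_eq_sum_ones,
    ← Finset.card_eq_sum_ones]

end Stmt19Aux

/-- For the Set Cover construction the following are
equivalent: (i) there is a set cover of size at most `k`; (ii) the constructed
instance admits a feasible matching; (iii) the constructed instance admits a
feasible and stable matching. -/
theorem stmt19 (nn mm k : ℕ) (SS : Fin mm → Finset (Fin nn))
    (hcover : ∀ x : Fin nn, ∃ i : Fin mm, x ∈ SS i)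
    (hk1 : 1 ≤ k) (hk2 : k < mm) :
    ((∃ Cov : Finset (Fin mm), Cov.card ≤ k ∧ ∀ x : Fin nn, ∃ i ∈ Cov, x ∈ SS i) ↔
      (∃ f : SCSt mm → Option Unit,
        (SCInst nn mm k SS).IsMatching f ∧ (SCInst nn mm k SS).Feasible f)) ∧
    ((∃ f : SCSt mm → Option Unit,
        (SCInst nn mm k SS).IsMatching f ∧ (SCInst nn mm k SS).Feasible f) ↔
      (∃ f : SCSt mm → Option Unit,
        (SCInst nn mm k SS).IsMatching f ∧ (SCInst nn mm k SS).Feasible f ∧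
        (SCInst nn mm k SS).Stable f)) := by
  classical
  set I := SCInst nn mm k SS with hI
  -- structural consequences of feasibility
  have struct : ∀ f : SCSt mm → Option Unit, I.Feasible f →
      (pB (I.assigned f ())).card = k ∧ pA (I.assigned f ()) = pB (I.assigned f ()) := by
    intro f hf
    set M := I.assigned f () with hM
    have hdum := ((hf ()).2 (Sum.inr (Sum.inr ())))
    have hBk : (pB M).card = k := by
      have h1 := hdum.1
      have h2 := hdum.2
      rw [show I.typeLoad f () (Sum.inr (Sum.inr ())) = (pB M).card from load_dummy M ()] at h1 h2
      have : I.lq () (Sum.inr (Sum.inr ())) = k := rfl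
      rw [this] at h1
      have : I.uq () (Sum.inr (Sum.inr ())) = k := rfl
      rw [this] at h2
      omega
    refine ⟨hBk, ?_⟩
    ext i
    have hset := (hf ()).2 (Sum.inr (Sum.inl i))
    have hload : I.typeLoad f () (Sum.inr (Sum.inl i))
        = (if i ∈ pA M then 1 else 0) + ((pB M).erase i).card := load_set M i
    have h1 := hset.1
    have h2 := hset.2
    rw [hload] at h1 h2
    have hlq : I.lq () (Sum.inr (Sum.inl i)) = k := rfl
    have huq : I.uq () (Sum.inr (Sum.inl i)) = k := rfl
    rw [hlq] at h1; rw [huq] at h2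
    by_cases hiB : i ∈ pB M
    · simp only [hiB, iff_true]
      by_contra hiA
      rw [if_neg hiA, Finset.card_erase_of_mem hiB, hBk] at h1
      omega
    · simp only [hiB, iff_false]
      intro hiA
      rw [if_pos hiA, Finset.erase_eq_of_notMem hiB, hBk] at h2
      omega
  -- every feasible matching is stable
  have stab : ∀ f : SCSt mm → Option Unit, I.Feasible f → I.Stable f := by
    intro f hf u w hb
    cases w
    obtain ⟨U', hne, _, _, hsub, _, _, hq⟩ := hb
    obtain ⟨hBk, hAB⟩ := struct f hf
    set M := I.assigned f () with hM
    have hfu : f u = none := by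
      cases h : f u with
      | none => rfl
      | some w' => exact absurd (by rw [h]) hne
    have hDB : pB (M \ U') ⊆ pB M := fun i hi => mem_pB.mpr ((Finset.sdiff_subset) (mem_pB.mp hi))
    have hDA : pA (M \ U') ⊆ pA M := fun i hi => mem_pA.mpr ((Finset.sdiff_subset) (mem_pA.mp hi))
    have hqd := hq (Sum.inr (Sum.inr ()))
    rw [sdiff_inst_congr] at hqd
    have hqds : ∑ u' ∈ M \ U', (I.tau u' (Sum.inr (Sum.inr ()))).toNat = (pB (M \ U')).card :=
      load_dummy (M \ U') ()
    cases u with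
    | inl i =>
      -- a set-student i, unmatched, i ∉ A
      have hiA : i ∉ pA M := by
        intro h
        have : f (Sum.inl i) = some () := by
          have := mem_pA.mp h
          simpa [hM, SMTI.assigned] using this
        rw [hfu] at this; exact Option.some_ne_none _ this.symm
      have htaud : (I.tau (Sum.inl i) (Sum.inr (Sum.inr ()))).toNat = 0 := rfl
      rw [htaud, hqds] at hqd
      have hBD : (pB (M \ U')).card = k := by
        have h1 := hqd.1
        have h2 := hqd.2
        have hlq : I.lq () (Sum.inr (Sum.inr ())) = k := rfl
        have huq : I.uq () (Sum.inr (Sum.inr ())) = k := rfl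
        rw [hlq] at h1; rw [huq] at h2
        omega
      have hqi := hq (Sum.inr (Sum.inl i))
      rw [sdiff_inst_congr] at hqi
      have htaui : (I.tau (Sum.inl i) (Sum.inr (Sum.inl i))).toNat = 1 := by
        simp [hI, SCInst]
      have hiBD : i ∉ pB (M \ U') := fun h => hiA (hAB ▸ hDB h)
      have hloadi : ∑ u' ∈ M \ U', (I.tau u' (Sum.inr (Sum.inl i))).toNat
          = (if i ∈ pA (M \ U') then 1 else 0) + ((pB (M \ U')).erase i).card := load_set (M \ U') i
      have h2 := hqi.2
      rw [hloadi, htaui, Finset.erase_eq_of_notMem hiBD, hBD] at h2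
      have huq : I.uq () (Sum.inr (Sum.inl i)) = k := rfl
      rw [huq] at h2
      by_cases hc : i ∈ pA (M \ U') <;> simp [hc] at h2 <;> omega
    | inr i =>
      -- a dummy student i, unmatched, i ∉ B
      have hiB : i ∉ pB M := by
        intro h
        have : f (Sum.inr i) = some () := by
          have := mem_pB.mp h
          simpa [hM, SMTI.assigned] using this
        rw [hfu] at this; exact Option.some_ne_none _ this.symm
      have htaud : (I.tau (Sum.inr i) (Sum.inr (Sum.inr ()))).toNat = 1 := rfl
      rw [htaud, hqds] at hqd
      have hBD : (pB (M \ U')).card = k - 1 := by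
        have h1 := hqd.1
        have h2 := hqd.2
        have hlq : I.lq () (Sum.inr (Sum.inr ())) = k := rfl
        have huq : I.uq () (Sum.inr (Sum.inr ())) = k := rfl
        rw [hlq] at h1; rw [huq] at h2
        omega
      have hqi := hq (Sum.inr (Sum.inl i))
      rw [sdiff_inst_congr] at hqi
      have htaui : (I.tau (Sum.inr i) (Sum.inr (Sum.inl i))).toNat = 0 := by
        simp [hI, SCInst]
      have hiBD : i ∉ pB (M \ U') := fun h => hiB (hDB h)
      have hloadi : ∑ u' ∈ M \ U', (I.tau u' (Sum.inr (Sum.inl i))).toNat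
          = (if i ∈ pA (M \ U') then 1 else 0) + ((pB (M \ U')).erase i).card := load_set (M \ U') i
      have h1 := hqi.1
      rw [hloadi, htaui, Finset.erase_eq_of_notMem hiBD, hBD] at h1
      have hlq : I.lq () (Sum.inr (Sum.inl i)) = k := rfl
      rw [hlq] at h1
      have hiAD : i ∈ pA (M \ U') := by
        by_contra hc
        rw [if_neg hc] at h1
        omega
      exact hiB (hAB ▸ hDA hiAD)
  constructor
  · constructor
    · -- (i) → (ii)
      rintro ⟨Cov, hCcard, hCcov⟩
      obtain ⟨A, hCovA, -, hAcard⟩ :=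
        Finset.exists_subsuperset_card_eq (Finset.subset_univ Cov) hCcard
          (by simpa using le_of_lt hk2)
      refine ⟨fun u => Sum.elim (fun i => if i ∈ A then some () else none)
          (fun i => if i ∈ A then some () else none) u, fun _ _ _ => trivial, ?_⟩
      intro w
      set f : SCSt mm → Option Unit := fun u => Sum.elim
          (fun i => if i ∈ A then some () else none)
          (fun i => if i ∈ A then some () else none) u with hfdef
      have hw : w = () := rfl
      set M := I.assigned f () with hM
      have hpA : pA M = A := by
        ext i
        rw [mem_pA]
        simp only [hM, SMTI.assigned, Finset.mem_filter, Finset.mem_univ, true_and, hfdef]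
        by_cases h : i ∈ A <;> simp [h]
      have hpB : pB M = A := by
        ext i
        rw [mem_pB]
        simp only [hM, SMTI.assigned, Finset.mem_filter, Finset.mem_univ, true_and, hfdef]
        by_cases h : i ∈ A <;> simp [h]
      constructor
      · rw [hw, show (I.assigned f ()).card = (pA M).card + (pB M).card from card_parts M,
          hpA, hpB, hAcard, show I.cap () = 2 * k from rfl]
        omega
      · intro z
        rw [hw]
        match z with
        | Sum.inl z =>
          have hload : I.typeLoad f () (Sum.inl z)
              = ((pA M).filter (fun i => z ∈ SS i)).card := load_elem M z
          rw [hload, hpA]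
          constructor
          · show (1 : ℕ) ≤ _
            obtain ⟨i, hiC, hz⟩ := hCcov z
            have : i ∈ A.filter (fun i => z ∈ SS i) :=
              Finset.mem_filter.mpr ⟨hCovA hiC, hz⟩
            exact Finset.card_pos.mpr ⟨i, this⟩
          · show _ ≤ k
            calc (A.filter (fun i => z ∈ SS i)).card ≤ A.card := Finset.card_filter_le _ _
              _ = k := hAcard
        | Sum.inr (Sum.inl i') =>
          have hload : I.typeLoad f () (Sum.inr (Sum.inl i'))
              = (if i' ∈ pA M then 1 else 0) + ((pB M).erase i').card := load_set M i'
          rw [hload, hpA, hpB]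
          have hlq : I.lq () (Sum.inr (Sum.inl i')) = k := rfl
          have huq : I.uq () (Sum.inr (Sum.inl i')) = k := rfl
          rw [hlq, huq]
          by_cases h : i' ∈ A
          · rw [if_pos h, Finset.card_erase_of_mem h, hAcard]
            omega
          · rw [if_neg h, Finset.erase_eq_of_notMem h, hAcard]
            omega
        | Sum.inr (Sum.inr uu) =>
          have hload : I.typeLoad f () (Sum.inr (Sum.inr uu)) = (pB M).card :=
            load_dummy M uu
          rw [hload, hpB, hAcard]
          exact ⟨le_refl _, le_refl _⟩
    · -- (ii) → (i)
      rintro ⟨f, -, hf⟩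
      obtain ⟨hBk, hAB⟩ := struct f hf
      set M := I.assigned f () with hM
      refine ⟨pA M, ?_, ?_⟩
      · rw [hAB, hBk]
      · intro z
        have helem := ((hf ()).2 (Sum.inl z)).1
        have hload : I.typeLoad f () (Sum.inl z)
            = ((pA M).filter (fun i => z ∈ SS i)).card := load_elem M z
        have hlq : I.lq () (Sum.inl z) = 1 := rfl
        rw [hload, hlq] at helem
        obtain ⟨i, hi⟩ := Finset.card_pos.mp helem
        obtain ⟨hiA, hiz⟩ := Finset.mem_filter.mp hi
        exact ⟨i, hiA, hiz⟩
  · constructor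
    · rintro ⟨f, h1, h2⟩
      exact ⟨f, h1, h2, stab f h2⟩
    · rintro ⟨f, h1, h2, -⟩
      exact ⟨f, h1, h2⟩
end
end
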